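/- Let $p\in\mathcal{P}^n[\mathbf{X}]$ with interpolation data $y_r = p(\mathbf{x}_r)$, and suppose there exists $\mathbf{z}\in\mathbb{K}$ with $p(\mathbf{z}) < 0$. Then $G(tL(\mathbf{z})) \to -\infty$ as $t\to+\infty$; in particular $G$ is not bounded below on the asymptotic cone. -/

import Mathlib

open MvPolynomial Matrix BigOperators

/-- Multi-indices `α` with `|α| ≤ m`, each component bounded by `m`. -/
def MIdx (d m : ℕ) : Type := {α : Fin d → Fin (m + 1) // ∑ i, ((α i : ℕ)) ≤ m}

noncomputable instance (d m : ℕ) : Fintype (MIdx d m) := Subtype.fintype _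
instance (d m : ℕ) : DecidableEq (MIdx d m) := Subtype.instDecidableEq

/-- The monomial `X^α` associated with a multi-index. -/
noncomputable def monIdx {d m : ℕ} (α : MIdx d m) : MvPolynomial (Fin d) ℝ :=
  ∏ i, (X i) ^ ((α.1 i : ℕ))

/-- The block-diagonal polynomial-valued localizing matrix
`B(X) = diag (g_1(X) D^{n_1}(X), …, g_{j*}(X) D^{n_{j*}}(X))`,
with `D^{n_j}(X)_{αβ} = X^α X^β`. -/
noncomputable def BPoly {d js : ℕ} (g : Fin js → MvPolynomial (Fin d) ℝ)
    (nj : Fin js → ℕ) :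
    Matrix ((j : Fin js) × MIdx d (nj j)) ((j : Fin js) × MIdx d (nj j))
      (MvPolynomial (Fin d) ℝ) :=
  fun p q => if p.1 = q.1 then g p.1 * monIdx p.2 * monIdx q.2 else 0

/-- Evaluation `B(x)` of the localizing matrix at a point. -/
noncomputable def BEval {d js : ℕ} (g : Fin js → MvPolynomial (Fin d) ℝ)
    (nj : Fin js → ℕ) (x : Fin d → ℝ) :
    Matrix ((j : Fin js) × MIdx d (nj j)) ((j : Fin js) × MIdx d (nj j)) ℝ :=
  fun p q => eval x (BPoly g nj p q)


set_option linter.unusedSectionVars false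
set_option linter.unusedVariables false
set_option linter.unnecessarySimpa false

section Aux
variable {ι : Type*} [Fintype ι] [DecidableEq ι]

lemma psd_smul {A : Matrix ι ι ℝ} (hA : A.PosSemidef) {c : ℝ} (hc : 0 ≤ c) :
    (c • A).PosSemidef := by
  refine Matrix.PosSemidef.of_dotProduct_mulVec_nonneg ?_ fun x => ?_
  · unfold Matrix.IsHermitian
    rw [conjTranspose_smul, hA.1.eq]; simp
  · have := hA.dotProduct_mulVec_nonneg x
    rw [smul_mulVec, dotProduct_smul]
    simpa using mul_nonneg hc this

lemma psd_trace_nonneg {A : Matrix ι ι ℝ} (hA : A.PosSemidef) : 0 ≤ A.trace := by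
  have hdiag : ∀ i, 0 ≤ A i i := by
    intro i
    have := hA.dotProduct_mulVec_nonneg (Pi.single i 1)
    simpa [mulVec, dotProduct, Pi.single_apply, Finset.sum_ite_eq] using this
  exact Finset.sum_nonneg fun i _ => hdiag i

lemma trace_inv_one_add_le {A : Matrix ι ι ℝ} (hA : A.PosSemidef) :
    (1 + A)⁻¹.trace ≤ (Fintype.card ι : ℝ) := by
  set M : Matrix ι ι ℝ := 1 + A with hM
  have hMpd : M.PosDef := Matrix.PosDef.add_posSemidef Matrix.PosDef.one hA
  have hdet : IsUnit M.det := hMpd.det_pos.ne'.isUnit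
  have hMM : M * M⁻¹ = 1 := Matrix.mul_nonsing_inv M hdet
  have hinvH : M⁻¹ᴴ = M⁻¹ := hMpd.isHermitian.inv
  have hkey : 1 - M⁻¹ = M⁻¹ * (A + A * A) * M⁻¹ᴴ := by
    have h1 : A + A * A = A * M := by rw [hM, mul_add, mul_one]
    have hMM' : M⁻¹ * M = 1 := Matrix.nonsing_inv_mul M hdet
    rw [hinvH, h1, ← Matrix.mul_assoc, Matrix.mul_assoc (M⁻¹ * A), hMM, mul_one]
    have h2 : M⁻¹ * A = M⁻¹ * (M - 1) := by rw [hM]; congr 1; abel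
    rw [h2, mul_sub, hMM', mul_one]
  have hAA : (A + A * A).PosSemidef := by
    have : A * A = Aᴴ * A := by rw [hA.1.eq]
    exact hA.add (this ▸ Matrix.posSemidef_conjTranspose_mul_self A)
  have hpsd : (1 - M⁻¹).PosSemidef := hkey ▸ hAA.mul_mul_conjTranspose_same M⁻¹
  have := psd_trace_nonneg hpsd
  rw [Matrix.trace_sub, Matrix.trace_one, sub_nonneg] at this
  exact this

end Aux


section BE
open MvPolynomial Matrix BigOperators

lemma monIdx_deg {d m : ℕ} (α : MIdx d m) : (monIdx α).totalDegree ≤ m := by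
  refine (totalDegree_finset_prod _ _).trans ?_
  calc ∑ i, ((X i : MvPolynomial (Fin d) ℝ) ^ ((α.1 i : ℕ))).totalDegree
      = ∑ i, ((α.1 i : ℕ)) := by
        refine Finset.sum_congr rfl fun i _ => ?_
        rw [totalDegree_X_pow]
    _ ≤ m := α.2

lemma BPoly_deg {d js n : ℕ} (g : Fin js → MvPolynomial (Fin d) ℝ)
    (hgn : ∀ j, (g j).totalDegree ≤ n)
    (nj : Fin js → ℕ) (hnj : ∀ j, nj j = (n - (g j).totalDegree) / 2)
    (p q : (j : Fin js) × MIdx d (nj j)) : (BPoly g nj p q).totalDegree ≤ n := by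
  unfold BPoly
  split
  · next h =>
    have h1 := monIdx_deg p.2
    have h2 := monIdx_deg q.2
    have hb : nj p.1 + nj q.1 ≤ n - (g p.1).totalDegree := by
      have e1 := hnj p.1
      have e2 : nj q.1 = (n - (g p.1).totalDegree) / 2 := by rw [hnj, ← h]
      omega
    calc (g p.1 * monIdx p.2 * monIdx q.2).totalDegree
        ≤ (g p.1 * monIdx p.2).totalDegree + (monIdx q.2).totalDegree := totalDegree_mul _ _
      _ ≤ (g p.1).totalDegree + (monIdx p.2).totalDegree + (monIdx q.2).totalDegree := by
          have := totalDegree_mul (g p.1) (monIdx p.2); omega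
      _ ≤ (g p.1).totalDegree + (nj p.1 + nj q.1) := by omega
      _ ≤ (g p.1).totalDegree + (n - (g p.1).totalDegree) := by omega
      _ ≤ n := by have := hgn p.1; omega
  · simpa using Nat.zero_le n

lemma BEval_psd {d js : ℕ} (g : Fin js → MvPolynomial (Fin d) ℝ)
    (nj : Fin js → ℕ) (x : Fin d → ℝ) (hx : ∀ j, 0 ≤ eval x (g j)) :
    (BEval g nj x).PosSemidef := by
  set E : Matrix (Fin js) ((j : Fin js) × MIdx d (nj j)) ℝ :=
    fun j p => if p.1 = j then Real.sqrt (eval x (g j)) * eval x (monIdx p.2) else 0 with hE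
  have : BEval g nj x = Eᴴ * E := by
    ext p q
    simp only [Matrix.mul_apply, conjTranspose_apply]
    simp only [Matrix.mul_apply, conjTranspose_apply, RCLike.star_def,
      starRingEnd_apply, star_trivial, hE]
    by_cases hpq : p.1 = q.1
    · rw [Finset.sum_eq_single p.1 (fun j _ hj => by simp [Ne.symm hj])
        (fun h => absurd (Finset.mem_univ _) h)]
      rw [if_pos rfl, if_pos hpq.symm]
      have : Real.sqrt (eval x (g p.1)) * eval x (monIdx p.2) *
          (Real.sqrt (eval x (g p.1)) * eval x (monIdx q.2))
          = (Real.sqrt (eval x (g p.1)) * Real.sqrt (eval x (g p.1))) *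
            (eval x (monIdx p.2) * eval x (monIdx q.2)) := by ring
      rw [this, Real.mul_self_sqrt (hx p.1)]
      simp [BEval, BPoly, if_pos hpq, hpq]
      ring
    · have : ∀ j ∈ Finset.univ, (if p.1 = j then Real.sqrt (eval x (g j)) * eval x (monIdx p.2) else 0)
          * (if q.1 = j then Real.sqrt (eval x (g j)) * eval x (monIdx q.2) else 0) = 0 := by
        intro j _
        by_cases h1 : p.1 = j
        · by_cases h2 : q.1 = j
          · exact absurd (h1.trans h2.symm) hpq
          · rw [if_neg h2]; ring
        · rw [if_neg h1]; ring
      rw [Finset.sum_congr rfl this]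
      simp [BEval, BPoly, if_neg hpq]
  rw [this]
  exact posSemidef_conjTranspose_mul_self E

end BE

/-- `M(λ) = I + ∑ r λ_r B_r`. -/
noncomputable def Mmat {rs : ℕ} {ι : Type*} [Fintype ι] [DecidableEq ι]
    (B : Fin rs → Matrix ι ι ℝ) (lam : Fin rs → ℝ) : Matrix ι ι ℝ :=
  1 + ∑ r, lam r • B r

/-- The dual function `G(λ) = tr(M(λ)⁻¹) + ⟨λ, y⟩`. -/
noncomputable def Gfun {rs : ℕ} {ι : Type*} [Fintype ι] [DecidableEq ι]
    (B : Fin rs → Matrix ι ι ℝ) (y : Fin rs → ℝ) (lam : Fin rs → ℝ) : ℝ :=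
  (Mmat B lam)⁻¹.trace + ∑ r, y r * lam r

theorem G_unbounded_below_if_p_negative_somewhere
    (d js n rs : ℕ)
    (g : Fin js → MvPolynomial (Fin d) ℝ)
    (hgn : ∀ j, (g j).totalDegree ≤ n)
    (nj : Fin js → ℕ) (hnj : ∀ j, nj j = (n - (g j).totalDegree) / 2)
    (xr : Fin rs → Fin d → ℝ)
    (hxK : ∀ r, ∀ j, 0 ≤ eval (xr r) (g j))
    (l : Fin rs → MvPolynomial (Fin d) ℝ)
    (hldeg : ∀ r, (l r).totalDegree ≤ n)
    (hdelta : ∀ r s, eval (xr s) (l r) = if r = s then (1 : ℝ) else 0)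
    (huni : ∀ p : MvPolynomial (Fin d) ℝ, p.totalDegree ≤ n →
      p = ∑ r, C (eval (xr r) p) * l r)
    (p : MvPolynomial (Fin d) ℝ) (hpdeg : p.totalDegree ≤ n)
    (z : Fin d → ℝ) (hz : ∀ j, 0 ≤ eval z (g j)) (hneg : eval z p < 0) :
    Filter.Tendsto
        (fun t : ℝ =>
          Gfun (fun r => BEval g nj (xr r)) (fun r => eval (xr r) p)
            (fun r => t * eval z (l r)))
        Filter.atTop Filter.atBot ∧
    ¬ BddBelow
        ((fun lam => Gfun (fun r => BEval g nj (xr r)) (fun r => eval (xr r) p) lam) ''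
          {lam : Fin rs → ℝ | (∑ r, lam r • BEval g nj (xr r)).PosSemidef}) := by
  set Bz := BEval g nj z with hBzdef
  have hBzpsd : Bz.PosSemidef := BEval_psd g nj z hz
  have hsum : ∀ q : MvPolynomial (Fin d) ℝ, q.totalDegree ≤ n →
      ∑ r, eval z (l r) * eval (xr r) q = eval z q := by
    intro q hq
    conv_rhs => rw [huni q hq]
    rw [map_sum]
    refine Finset.sum_congr rfl fun r _ => ?_
    rw [eval_mul, eval_C]; ring
  have hBsum : ∑ r, eval z (l r) • BEval g nj (xr r) = Bz := by
    ext pq qq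
    rw [Matrix.sum_apply]
    simp only [Matrix.smul_apply, smul_eq_mul]
    exact hsum _ (BPoly_deg g hgn nj hnj pq qq)
  have hsmul : ∀ t : ℝ, ∑ r, (t * eval z (l r)) • BEval g nj (xr r) = t • Bz := by
    intro t
    rw [← hBsum, Finset.smul_sum]
    exact Finset.sum_congr rfl fun r _ => (smul_smul t (eval z (l r)) _).symm
  have hMeq : ∀ t : ℝ, Mmat (fun r => BEval g nj (xr r)) (fun r => t * eval z (l r))
      = 1 + t • Bz := by
    intro t
    unfold Mmat
    rw [hsmul t]
  have hlin : ∀ t : ℝ, ∑ r, eval (xr r) p * (t * eval z (l r)) = t * eval z p := by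
    intro t
    rw [← hsum p hpdeg, Finset.mul_sum]
    refine Finset.sum_congr rfl fun r _ => ?_; ring
  have hGle : ∀ t : ℝ, 0 ≤ t →
      Gfun (fun r => BEval g nj (xr r)) (fun r => eval (xr r) p)
          (fun r => t * eval z (l r))
        ≤ (Fintype.card ((j : Fin js) × MIdx d (nj j)) : ℝ) + t * eval z p := by
    intro t ht
    unfold Gfun
    rw [hMeq t, hlin t]
    exact add_le_add_left (trace_inv_one_add_le (psd_smul hBzpsd ht)) _
  have hcb : Filter.Tendsto
      (fun t : ℝ => (Fintype.card ((j : Fin js) × MIdx d (nj j)) : ℝ) + t * eval z p)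
      Filter.atTop Filter.atBot := by
    apply Filter.tendsto_atBot_add_const_left
    exact (Filter.tendsto_mul_const_atBot_of_neg hneg).mpr Filter.tendsto_id
  have hT : Filter.Tendsto
      (fun t : ℝ =>
        Gfun (fun r => BEval g nj (xr r)) (fun r => eval (xr r) p)
          (fun r => t * eval z (l r)))
      Filter.atTop Filter.atBot :=
    Filter.tendsto_atBot_mono' Filter.atTop
      ((Filter.eventually_ge_atTop 0).mono fun t ht => hGle t ht) hcb
  refine ⟨hT, ?_⟩
  rintro ⟨c, hc⟩
  have h1 : ∀ᶠ t in Filter.atTop,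
      Gfun (fun r => BEval g nj (xr r)) (fun r => eval (xr r) p)
        (fun r => t * eval z (l r)) < c :=
    hT.eventually (Filter.eventually_lt_atBot c)
  obtain ⟨t, ht⟩ := ((Filter.eventually_ge_atTop 0).and h1).exists
  have hmem : (fun r => t * eval z (l r)) ∈
      {lam : Fin rs → ℝ | (∑ r, lam r • BEval g nj (xr r)).PosSemidef} := by
    show (∑ r, (t * eval z (l r)) • BEval g nj (xr r)).PosSemidef
    rw [hsmul t]
    exact psd_smul hBzpsd ht.1
  exact absurd (hc (Set.mem_image_of_mem _ hmem)) (not_le.mpr ht.2)
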